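/- For all natural numbers n, j, γ, the Jacobi-Stirling number JS_γ(n,j) equals the number of Jacobi-Stirling set partitions of the multiset [n]₂ = {1₁,1₂,...,n₁,n₂} into γ zero blocks and j nonzero blocks. -/

import Mathlib

/-- Jacobi-Stirling numbers of the second kind, defined by the triangular
recurrence and initial conditions. -/
def JS {R : Type*} [CommRing R] (γ : R) : ℕ → ℕ → R
  | 0, 0 => 1
  | _ + 1, 0 => 0
  | 0, _ + 1 => 0
  | n + 1, j + 1 => JS γ n j + ((j : R) + 1) * (((j : R) + 1) + 2 * γ - 1) * JS γ n (j + 1)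

/-- A Jacobi-Stirling set partition of `[n]₂` (modelled as `Fin n × Bool`, where
`(i, false)` and `(i, true)` are the two copies of the number `i`) into `γ`
distinguishable, possibly empty zero blocks and `j` indistinguishable nonempty
nonzero blocks. -/
structure JSPartition (n j γ : ℕ) where
  /-- The `γ` distinguishable zero blocks. -/
  zero : Fin γ → Finset (Fin n × Bool)
  /-- The set of nonzero blocks. -/
  nonzero : Finset (Finset (Fin n × Bool))
  /-- There are `j` nonzero blocks. -/
  card_nonzero : nonzero.card = j
  /-- Nonzero blocks are nonempty. -/
  nonzero_nonempty : ∀ b ∈ nonzero, b.Nonempty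
  /-- Distinct zero blocks are disjoint. -/
  zero_disjoint : ∀ a b : Fin γ, a ≠ b → Disjoint (zero a) (zero b)
  /-- Zero blocks are disjoint from nonzero blocks. -/
  zero_nonzero_disjoint : ∀ a : Fin γ, ∀ b ∈ nonzero, Disjoint (zero a) b
  /-- Distinct nonzero blocks are disjoint. -/
  nonzero_disjoint : ∀ b ∈ nonzero, ∀ b' ∈ nonzero, b ≠ b' → Disjoint b b'
  /-- The blocks cover `[n]₂`. -/
  cover : ∀ x : Fin n × Bool, (∃ a, x ∈ zero a) ∨ (∃ b ∈ nonzero, x ∈ b)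
  /-- The union of the zero blocks contains at most one copy of each number. -/
  zero_no_both : ∀ i : Fin n,
    ¬ ((∃ a, (i, false) ∈ zero a) ∧ (∃ a, (i, true) ∈ zero a))
  /-- Each nonzero block contains both copies of its smallest element, but not both
  copies of any other element. -/
  nonzero_min : ∀ b ∈ nonzero, ∃ m : Fin n,
    (m, false) ∈ b ∧ (m, true) ∈ b ∧ (∀ x ∈ b, m ≤ x.1) ∧
      (∀ i : Fin n, (i, false) ∈ b → (i, true) ∈ b → i = m)

namespace JSAux
open Finset

variable {n j γ : ℕ}

theorem JSPartition.ext' {p q : JSPartition n j γ}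
    (h1 : p.zero = q.zero) (h2 : p.nonzero = q.nonzero) : p = q := by
  cases p; cases q; cases h1; cases h2; rfl

instance : Finite (JSPartition n j γ) :=
  Finite.of_injective (fun p => (p.zero, p.nonzero)) (by
    intro p q h
    exact JSPartition.ext' (congrArg Prod.fst h) (congrArg Prod.snd h))

noncomputable instance : Fintype (JSPartition n j γ) := Fintype.ofFinite _

/-- base case n = 0, j = 0 -/
instance : Unique (JSPartition 0 0 γ) where
  default :=
    { zero := fun _ => ∅
      nonzero := ∅
      card_nonzero := rfl
      nonzero_nonempty := by simp
      zero_disjoint := by simp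
      zero_nonzero_disjoint := by simp
      nonzero_disjoint := by simp
      cover := fun x => x.1.elim0
      zero_no_both := fun i => i.elim0
      nonzero_min := by simp }
  uniq p := by
    apply JSPartition.ext'
    · funext a
      apply Finset.eq_empty_of_forall_notMem
      exact fun x _ => x.1.elim0
    · have := p.card_nonzero
      simpa [Finset.card_eq_zero] using this

instance : IsEmpty (JSPartition 0 (j + 1) γ) := by
  constructor
  intro p
  have h : p.nonzero.Nonempty := by
    rw [← Finset.card_pos, p.card_nonzero]; omega
  obtain ⟨b, hb⟩ := h
  obtain ⟨x, _⟩ := p.nonzero_nonempty b hb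
  exact x.1.elim0

instance : IsEmpty (JSPartition (n + 1) 0 γ) := by
  constructor
  intro p
  have hnz : p.nonzero = ∅ := by
    simpa [Finset.card_eq_zero] using p.card_nonzero
  have h0 := p.cover (0, false)
  have h1 := p.cover (0, true)
  rw [hnz] at h0 h1
  simp only [Finset.notMem_empty] at h0 h1
  have h0' : ∃ a, ((0 : Fin (n+1)), false) ∈ p.zero a := by tauto
  have h1' : ∃ a, ((0 : Fin (n+1)), true) ∈ p.zero a := by tauto
  exact p.zero_no_both 0 ⟨h0', h1'⟩


abbrev El (n : ℕ) := Fin n × Bool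

def emb (x : El n) : El (n + 1) := (x.1.castSucc, x.2)

lemma emb_inj : Function.Injective (emb (n := n)) := by
  intro a b h
  unfold emb at h
  rw [Prod.ext_iff] at h
  exact Prod.ext (Fin.castSucc_inj.mp h.1) h.2

lemma emb_fst_ne_last (x : El n) : (emb x).1 ≠ Fin.last n :=
  Fin.ne_last_of_lt (Fin.castSucc_lt_last x.1)

lemma exists_emb {y : El (n + 1)} (hy : y.1 ≠ Fin.last n) : ∃ x : El n, emb x = y := by
  obtain ⟨i, hi⟩ := Fin.exists_castSucc_eq.mpr hy
  exact ⟨(i, y.2), Prod.ext hi rfl⟩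

def down (s : Finset (El (n + 1))) : Finset (El n) :=
  Finset.univ.filter (fun x => emb x ∈ s)

@[simp] lemma mem_down {s : Finset (El (n + 1))} {x : El n} : x ∈ down s ↔ emb x ∈ s := by
  simp [down]

def up (s : Finset (El n)) : Finset (El (n + 1)) := s.image emb

lemma mem_up {s : Finset (El n)} {y : El (n + 1)} : y ∈ up s ↔ ∃ x ∈ s, emb x = y := by
  simp [up]

@[simp] lemma emb_mem_up {s : Finset (El n)} {x : El n} : emb x ∈ up s ↔ x ∈ s := by
  rw [mem_up]
  constructor
  · rintro ⟨x', hx', h⟩; rwa [← emb_inj h]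
  · exact fun h => ⟨x, h, rfl⟩

@[simp] lemma pair_castSucc_mem_up {s : Finset (El n)} {i : Fin n} {c : Bool} :
    (i.castSucc, c) ∈ up s ↔ (i, c) ∈ s := emb_mem_up (x := (i, c))

lemma fst_ne_last_of_mem_up {s : Finset (El n)} {y : El (n + 1)} (h : y ∈ up s) :
    y.1 ≠ Fin.last n := by
  rw [mem_up] at h; obtain ⟨x, _, rfl⟩ := h; exact emb_fst_ne_last x

lemma last_not_mem_up {s : Finset (El n)} {c : Bool} : (Fin.last n, c) ∉ up s := by
  intro h; exact fst_ne_last_of_mem_up h rfl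

@[simp] lemma down_up (s : Finset (El n)) : down (up s) = s := by
  ext x; simp

lemma up_down {s : Finset (El (n + 1))} (h : ∀ y ∈ s, y.1 ≠ Fin.last n) :
    up (down s) = s := by
  ext y
  rw [mem_up]
  constructor
  · rintro ⟨x, hx, rfl⟩; simpa using hx
  · intro hy
    obtain ⟨x, rfl⟩ := exists_emb (h y hy)
    exact ⟨x, by simpa using hy, rfl⟩

lemma up_nonempty {s : Finset (El n)} (h : s.Nonempty) : (up s).Nonempty :=
  h.image _

lemma up_disjoint {s t : Finset (El n)} (h : Disjoint s t) : Disjoint (up s) (up t) := by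
  rw [Finset.disjoint_left] at h ⊢
  intro y hy hy'
  rw [mem_up] at hy hy'
  obtain ⟨x, hx, rfl⟩ := hy
  obtain ⟨x', hx', hxx⟩ := hy'
  rw [emb_inj hxx] at hx'
  exact h hx hx'

lemma down_disjoint {s t : Finset (El (n + 1))} (h : Disjoint s t) :
    Disjoint (down s) (down t) := by
  rw [Finset.disjoint_left] at h ⊢
  intro x hx hx'
  rw [mem_down] at hx hx'
  exact h hx hx'

lemma up_injective : Function.Injective (up (n := n)) := by
  intro s t h
  rw [← down_up s, h, down_up]

/-! ### Slots and placements -/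

abbrev Slot (n γ : ℕ) := Fin γ ⊕ Finset (El n)

def Ok (s : Finset (Finset (El n))) (pl : Slot n γ × Slot n γ) : Prop :=
  pl.1 ≠ pl.2 ∧ (pl.1.isRight ∨ pl.2.isRight) ∧
    (∀ b, pl.1 = Sum.inr b → b ∈ s) ∧ (∀ b, pl.2 = Sum.inr b → b ∈ s)

instance {s : Finset (Finset (El n))} : DecidablePred (Ok (γ := γ) s) := fun pl => by
  unfold Ok; infer_instance

lemma card_ok (s : Finset (Finset (El n))) (γ : ℕ) :
    Nat.card {pl : Slot n γ × Slot n γ // Ok s pl} =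
      s.card * s.card - s.card + 2 * γ * s.card := by
  classical
  rw [Nat.card_eq_fintype_card, Fintype.card_subtype]
  have hset : (Finset.univ.filter (Ok (γ := γ) s)) =
      ((Finset.univ ×ˢ s).image fun z : Fin γ × Finset (El n) => (Sum.inl z.1, Sum.inr z.2)) ∪
      ((s ×ˢ Finset.univ).image fun z : Finset (El n) × Fin γ => (Sum.inr z.1, Sum.inl z.2)) ∪
      (s.offDiag.image fun z : Finset (El n) × Finset (El n) => (Sum.inr z.1, Sum.inr z.2)) := by
    ext pl
    obtain ⟨p1 | p1, p2 | p2⟩ := pl <;>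
      simp [Ok, Finset.mem_offDiag, Prod.ext_iff] <;> tauto
  rw [hset]
  rw [Finset.card_union_of_disjoint, Finset.card_union_of_disjoint]
  · rw [Finset.card_image_of_injective, Finset.card_image_of_injective,
      Finset.card_image_of_injective]
    · rw [Finset.offDiag_card, Finset.card_product, Finset.card_product,
        Finset.card_univ, Fintype.card_fin]
      have hr : 2 * γ * s.card = γ * s.card + s.card * γ := by ring
      cases Nat.eq_zero_or_pos s.card with
      | inl h => simp [h]
      | inr h =>
        have hle : s.card ≤ s.card * s.card := Nat.le_mul_of_pos_left _ h
        omega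
    · intro a b h; simpa [Prod.ext_iff] using h
    · intro a b h; simpa [Prod.ext_iff] using h
    · intro a b h; simpa [Prod.ext_iff] using h
  · rw [Finset.disjoint_left]
    rintro pl hpl hpl'
    simp only [Finset.mem_image, Finset.mem_product] at hpl hpl'
    obtain ⟨z, _, rfl⟩ := hpl
    obtain ⟨z', _, h⟩ := hpl'
    exact absurd (congrArg Prod.fst h) (by simp)
  · rw [Finset.disjoint_left]
    rintro pl hpl hpl'
    rw [Finset.mem_union] at hpl
    simp only [Finset.mem_image, Finset.mem_product, Finset.mem_offDiag] at hpl hpl'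
    obtain ⟨z', _, h⟩ := hpl'
    rcases hpl with ⟨z, _, rfl⟩ | ⟨z, _, rfl⟩
    · exact absurd (congrArg Prod.fst h) (by simp)
    · exact absurd (congrArg Prod.snd h) (by simp)


def L0 : El (n + 1) := (Fin.last n, false)
def L1 : El (n + 1) := (Fin.last n, true)
def pairL : Finset (El (n + 1)) := {L0, L1}

lemma mem_pairL {y : El (n + 1)} : y ∈ pairL ↔ y = L0 ∨ y = L1 := by
  simp [pairL]

lemma eq_L0_or_L1 {y : El (n + 1)} (hy : y.1 = Fin.last n) : y = L0 ∨ y = L1 := by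
  obtain ⟨y1, y2⟩ := y
  simp only at hy
  subst hy
  cases y2
  · left; rfl
  · right; rfl

lemma L0_fst : (L0 : El (n + 1)).1 = Fin.last n := rfl
lemma L1_fst : (L1 : El (n + 1)).1 = Fin.last n := rfl

lemma pairL_ne_up (s : Finset (El n)) : pairL ≠ up s := by
  intro h
  have : L0 ∈ up s := by rw [← h]; exact mem_pairL.mpr (Or.inl rfl)
  exact absurd this last_not_mem_up

lemma mem_of_fst_last {s : Finset (El (n+1))} {y : El (n+1)} (hs : ∀ z ∈ s, z.1 ≠ Fin.last n)
    (hy : y.1 = Fin.last n) : y ∉ s := fun h => hs y h hy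

def liftA (q : JSPartition n j γ) : JSPartition (n + 1) (j + 1) γ where
  zero a := up (q.zero a)
  nonzero := insert pairL (q.nonzero.image up)
  card_nonzero := by
    rw [Finset.card_insert_of_notMem, Finset.card_image_of_injective _ up_injective,
      q.card_nonzero]
    intro h
    obtain ⟨b, _, hb⟩ := Finset.mem_image.mp h
    exact pairL_ne_up b hb.symm
  nonzero_nonempty := by
    intro b hb
    rcases Finset.mem_insert.mp hb with rfl | hb
    · exact ⟨L0, mem_pairL.mpr (Or.inl rfl)⟩
    · obtain ⟨b', hb', rfl⟩ := Finset.mem_image.mp hb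
      exact up_nonempty (q.nonzero_nonempty b' hb')
  zero_disjoint := fun a b hab => up_disjoint (q.zero_disjoint a b hab)
  zero_nonzero_disjoint := by
    intro a b hb
    rcases Finset.mem_insert.mp hb with rfl | hb
    · rw [Finset.disjoint_left]
      intro y hy hy'
      exact fst_ne_last_of_mem_up hy
        (by rcases mem_pairL.mp hy' with rfl | rfl <;> rfl)
    · obtain ⟨b', hb', rfl⟩ := Finset.mem_image.mp hb
      exact up_disjoint (q.zero_nonzero_disjoint a b' hb')
  nonzero_disjoint := by
    intro b hb b' hb' hne
    rcases Finset.mem_insert.mp hb with rfl | hb <;>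
      rcases Finset.mem_insert.mp hb' with rfl | hb'
    · exact absurd rfl hne
    · obtain ⟨c, hc, rfl⟩ := Finset.mem_image.mp hb'
      rw [Finset.disjoint_left]
      intro y hy hy'
      exact fst_ne_last_of_mem_up hy'
        (by rcases mem_pairL.mp hy with rfl | rfl <;> rfl)
    · obtain ⟨c, hc, rfl⟩ := Finset.mem_image.mp hb
      rw [Finset.disjoint_left]
      intro y hy hy'
      exact fst_ne_last_of_mem_up hy
        (by rcases mem_pairL.mp hy' with rfl | rfl <;> rfl)
    · obtain ⟨c, hc, rfl⟩ := Finset.mem_image.mp hb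
      obtain ⟨c', hc', rfl⟩ := Finset.mem_image.mp hb'
      exact up_disjoint (q.nonzero_disjoint c hc c' hc'
        (fun h => hne (congrArg up h)))
  cover := by
    intro y
    by_cases hl : y.1 = Fin.last n
    · right
      exact ⟨pairL, Finset.mem_insert_self _ _, mem_pairL.mpr (eq_L0_or_L1 hl)⟩
    · obtain ⟨x, rfl⟩ := exists_emb hl
      rcases q.cover x with ⟨a, ha⟩ | ⟨b, hb, hxb⟩
      · exact Or.inl ⟨a, emb_mem_up.mpr ha⟩
      · exact Or.inr ⟨up b, Finset.mem_insert_of_mem (Finset.mem_image_of_mem _ hb),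
          emb_mem_up.mpr hxb⟩
  zero_no_both := by
    intro i ⟨⟨a, ha⟩, ⟨a', ha'⟩⟩
    by_cases hl : i = Fin.last n
    · subst hl
      exact last_not_mem_up ha
    · obtain ⟨i', rfl⟩ := Fin.exists_castSucc_eq.mpr hl
      exact q.zero_no_both i' ⟨⟨a, by simpa using ha⟩, ⟨a', by simpa using ha'⟩⟩
  nonzero_min := by
    intro b hb
    rcases Finset.mem_insert.mp hb with rfl | hb
    · refine ⟨Fin.last n, mem_pairL.mpr (Or.inl rfl), mem_pairL.mpr (Or.inr rfl), ?_, ?_⟩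
      · intro x hx
        rcases mem_pairL.mp hx with rfl | rfl <;> exact le_refl _
      · intro i hi _
        rcases mem_pairL.mp hi with h | h
        · exact congrArg Prod.fst h
        · exact absurd (congrArg Prod.snd h) (by simp [L1])
    · obtain ⟨c, hc, rfl⟩ := Finset.mem_image.mp hb
      obtain ⟨m, hm0, hm1, hmin, hboth⟩ := q.nonzero_min c hc
      refine ⟨m.castSucc, ?_, ?_, ?_, ?_⟩
      · exact emb_mem_up.mpr hm0
      · exact emb_mem_up.mpr hm1
      · intro x hx
        rw [mem_up] at hx
        obtain ⟨x', hx', rfl⟩ := hx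
        exact Fin.castSucc_le_castSucc_iff.mpr (hmin x' hx')
      · intro i hi0 hi1
        by_cases hl : i = Fin.last n
        · exact absurd hi0 (hl ▸ last_not_mem_up)
        · obtain ⟨i', rfl⟩ := Fin.exists_castSucc_eq.mpr hl
          exact congrArg Fin.castSucc (hboth i' (by simpa using hi0) (by simpa using hi1))

lemma ne_last_of_mem_zero (p : JSPartition (n + 1) (j + 1) γ) (h : pairL ∈ p.nonzero)
    {a : Fin γ} {y : El (n + 1)} (hy : y ∈ p.zero a) : y.1 ≠ Fin.last n :=
  fun hl => Finset.disjoint_left.mp (p.zero_nonzero_disjoint a pairL h) hy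
    (mem_pairL.mpr (eq_L0_or_L1 hl))

lemma ne_last_of_mem_erase (p : JSPartition (n + 1) (j + 1) γ) (h : pairL ∈ p.nonzero)
    {b : Finset (El (n + 1))} {y : El (n + 1)} (hb : b ∈ p.nonzero.erase pairL)
    (hy : y ∈ b) : y.1 ≠ Fin.last n := by
  obtain ⟨hne, hbm⟩ := Finset.mem_erase.mp hb
  exact fun hl => Finset.disjoint_left.mp (p.nonzero_disjoint b hbm pairL h hne) hy
    (mem_pairL.mpr (eq_L0_or_L1 hl))

def dropA (p : JSPartition (n + 1) (j + 1) γ) (h : pairL ∈ p.nonzero) :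
    JSPartition n j γ where
  zero a := down (p.zero a)
  nonzero := (p.nonzero.erase pairL).image down
  card_nonzero := by
    have hinj : Set.InjOn (down (n := n)) ↑(p.nonzero.erase pairL) := by
      intro b hb b' hb' hd
      rw [← up_down (fun y hy => ne_last_of_mem_erase p h (Finset.mem_coe.mp hb) hy), hd,
        up_down (fun y hy => ne_last_of_mem_erase p h (Finset.mem_coe.mp hb') hy)]
    rw [Finset.card_image_of_injOn hinj, Finset.card_erase_of_mem h, p.card_nonzero]
    omega
  nonzero_nonempty := by
    intro s hs
    obtain ⟨b, hb, rfl⟩ := Finset.mem_image.mp hs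
    obtain ⟨m, hm0, _, _, _⟩ := p.nonzero_min b (Finset.mem_erase.mp hb).2
    obtain ⟨m', rfl⟩ := Fin.exists_castSucc_eq.mpr
      (show m ≠ Fin.last n from fun hl => ne_last_of_mem_erase p h hb hm0 (by rw [hl]))
    exact ⟨(m', false), mem_down.mpr hm0⟩
  zero_disjoint := fun a b hab => down_disjoint (p.zero_disjoint a b hab)
  zero_nonzero_disjoint := by
    intro a s hs
    obtain ⟨b, hb, rfl⟩ := Finset.mem_image.mp hs
    exact down_disjoint (p.zero_nonzero_disjoint a b (Finset.mem_erase.mp hb).2)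
  nonzero_disjoint := by
    intro s hs t ht hne
    obtain ⟨b, hb, rfl⟩ := Finset.mem_image.mp hs
    obtain ⟨b', hb', rfl⟩ := Finset.mem_image.mp ht
    exact down_disjoint (p.nonzero_disjoint b (Finset.mem_erase.mp hb).2 b'
      (Finset.mem_erase.mp hb').2 (fun he => hne (congrArg down he)))
  cover := by
    intro x
    rcases p.cover (emb x) with ⟨a, ha⟩ | ⟨b, hb, hxb⟩
    · exact Or.inl ⟨a, mem_down.mpr ha⟩
    · right
      have hbne : b ≠ pairL := by
        rintro rfl
        rcases mem_pairL.mp hxb with h' | h' <;>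
          exact emb_fst_ne_last x (congrArg Prod.fst h')
      exact ⟨down b, Finset.mem_image_of_mem _ (Finset.mem_erase.mpr ⟨hbne, hb⟩),
        mem_down.mpr hxb⟩
  zero_no_both := by
    intro i ⟨⟨a, ha⟩, ⟨a', ha'⟩⟩
    exact p.zero_no_both i.castSucc ⟨⟨a, mem_down.mp ha⟩, ⟨a', mem_down.mp ha'⟩⟩
  nonzero_min := by
    intro s hs
    obtain ⟨b, hb, rfl⟩ := Finset.mem_image.mp hs
    obtain ⟨m, hm0, hm1, hmin, hboth⟩ := p.nonzero_min b (Finset.mem_erase.mp hb).2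
    obtain ⟨m', rfl⟩ := Fin.exists_castSucc_eq.mpr
      (show m ≠ Fin.last n from fun hl => ne_last_of_mem_erase p h hb hm0 (by rw [hl]))
    refine ⟨m', mem_down.mpr hm0, mem_down.mpr hm1, ?_, ?_⟩
    · intro x hx
      exact Fin.castSucc_le_castSucc_iff.mp (hmin (emb x) (mem_down.mp hx))
    · intro i hi0 hi1
      exact Fin.castSucc_inj.mp (hboth i.castSucc (mem_down.mp hi0) (mem_down.mp hi1))

lemma pairL_not_mem_image_up (s : Finset (Finset (El n))) : pairL ∉ s.image up := by
  intro h
  obtain ⟨b, _, hb⟩ := Finset.mem_image.mp h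
  exact pairL_ne_up b hb.symm

lemma dropA_liftA (q : JSPartition n j γ) (h : pairL ∈ (liftA q).nonzero) :
    dropA (liftA q) h = q := by
  apply JSPartition.ext'
  · funext a
    exact down_up (q.zero a)
  · show ((insert pairL (q.nonzero.image up)).erase pairL).image down = q.nonzero
    rw [Finset.erase_insert (pairL_not_mem_image_up _), Finset.image_image]
    have heq : Set.EqOn (down (n := n) ∘ up) id ↑q.nonzero := fun b _ => down_up b
    rw [Finset.image_congr heq, Finset.image_id]

lemma liftA_dropA (p : JSPartition (n + 1) (j + 1) γ) (h : pairL ∈ p.nonzero) :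
    liftA (dropA p h) = p := by
  apply JSPartition.ext'
  · funext a
    exact up_down (fun y hy => ne_last_of_mem_zero p h hy)
  · show insert pairL (((p.nonzero.erase pairL).image down).image up) = p.nonzero
    rw [Finset.image_image]
    have heq : (p.nonzero.erase pairL).image (up ∘ down) = p.nonzero.erase pairL := by
      rw [Finset.image_congr (g := id), Finset.image_id]
      intro b hb
      exact up_down (fun y hy => ne_last_of_mem_erase p h (Finset.mem_coe.mp hb) hy)
    rw [heq, Finset.insert_erase h]

/-! ### Case 2: the two copies of the last element are in different blocks -/

lemma L0_ne_L1 : (L0 : El (n + 1)) ≠ L1 := by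
  intro h
  exact absurd (congrArg Prod.snd h) (by simp [L0, L1])

def add (t σ : Slot n γ) (x : El (n + 1)) : Finset (El (n + 1)) :=
  if t = σ then {x} else ∅

lemma mem_add {t σ : Slot n γ} {x y : El (n + 1)} :
    y ∈ add t σ x ↔ t = σ ∧ y = x := by
  unfold add
  split_ifs with h <;> simp [h]

def tri (pl : Slot n γ × Slot n γ) (σ : Slot n γ) (s : Finset (El n)) :
    Finset (El (n + 1)) :=
  up s ∪ add pl.1 σ L0 ∪ add pl.2 σ L1

lemma mem_tri {pl : Slot n γ × Slot n γ} {σ : Slot n γ} {s : Finset (El n)}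
    {y : El (n + 1)} :
    y ∈ tri pl σ s ↔ y ∈ up s ∨ (pl.1 = σ ∧ y = L0) ∨ (pl.2 = σ ∧ y = L1) := by
  simp [tri, Finset.mem_union, mem_add, or_assoc]

lemma emb_mem_tri {pl : Slot n γ × Slot n γ} {σ : Slot n γ} {s : Finset (El n)}
    {x : El n} : emb x ∈ tri pl σ s ↔ x ∈ s := by
  rw [mem_tri]
  constructor
  · rintro (h | ⟨_, h⟩ | ⟨_, h⟩)
    · exact emb_mem_up.mp h
    · exact absurd (congrArg Prod.fst h) (emb_fst_ne_last x)
    · exact absurd (congrArg Prod.fst h) (emb_fst_ne_last x)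
  · exact fun h => Or.inl (emb_mem_up.mpr h)

lemma L0_mem_tri {pl : Slot n γ × Slot n γ} {σ : Slot n γ} {s : Finset (El n)} :
    L0 ∈ tri pl σ s ↔ pl.1 = σ := by
  rw [mem_tri]
  constructor
  · rintro (h | ⟨h, _⟩ | ⟨_, h⟩)
    · exact absurd h last_not_mem_up
    · exact h
    · exact absurd h L0_ne_L1
  · exact fun h => Or.inr (Or.inl ⟨h, rfl⟩)

lemma L1_mem_tri {pl : Slot n γ × Slot n γ} {σ : Slot n γ} {s : Finset (El n)} :
    L1 ∈ tri pl σ s ↔ pl.2 = σ := by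
  rw [mem_tri]
  constructor
  · rintro (h | ⟨_, h⟩ | ⟨h, _⟩)
    · exact absurd h last_not_mem_up
    · exact absurd h.symm L0_ne_L1
    · exact h
  · exact fun h => Or.inr (Or.inr ⟨h, rfl⟩)

lemma down_tri (pl : Slot n γ × Slot n γ) (σ : Slot n γ) (s : Finset (El n)) :
    down (tri pl σ s) = s := by
  ext x
  rw [mem_down, emb_mem_tri]

lemma tri_disjoint {pl : Slot n γ × Slot n γ} {σ τ : Slot n γ} {s t : Finset (El n)}
    (hst : Disjoint s t) (hστ : σ ≠ τ) : Disjoint (tri pl σ s) (tri pl τ t) := by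
  rw [Finset.disjoint_left]
  intro y hy hy'
  rw [mem_tri] at hy hy'
  rcases hy with hy | ⟨h1, rfl⟩ | ⟨h2, rfl⟩
  · rcases hy' with hy' | ⟨_, rfl⟩ | ⟨_, rfl⟩
    · rw [mem_up] at hy hy'
      obtain ⟨x, hx, rfl⟩ := hy
      obtain ⟨x', hx', he⟩ := hy'
      rw [emb_inj he] at hx'
      exact Finset.disjoint_left.mp hst hx hx'
    · exact last_not_mem_up hy
    · exact last_not_mem_up hy
  · rcases hy' with hy' | ⟨h1', _⟩ | ⟨_, he⟩
    · exact last_not_mem_up hy'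
    · exact hστ (h1 ▸ h1')
    · exact L0_ne_L1 he
  · rcases hy' with hy' | ⟨_, he⟩ | ⟨h2', _⟩
    · exact last_not_mem_up hy'
    · exact L0_ne_L1 he.symm
    · exact hστ (h2 ▸ h2')

def liftB (q : JSPartition n (j + 1) γ) (pl : Slot n γ × Slot n γ)
    (hpl : Ok q.nonzero pl) : JSPartition (n + 1) (j + 1) γ where
  zero a := tri pl (Sum.inl a) (q.zero a)
  nonzero := q.nonzero.image (fun b => tri pl (Sum.inr b) b)
  card_nonzero := by
    have hinj : Set.InjOn (fun b => tri pl (Sum.inr b) b) ↑q.nonzero := by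
      intro b hb b' hb' he
      by_contra hne
      obtain ⟨x, hx⟩ := q.nonzero_nonempty b (Finset.mem_coe.mp hb)
      have he' : tri pl (Sum.inr b) b = tri pl (Sum.inr b') b' := he
      have h2 : emb x ∈ tri pl (Sum.inr b') b' := by
        rw [← he']; exact emb_mem_tri.mpr hx
      exact Finset.disjoint_left.mp
        (q.nonzero_disjoint b (Finset.mem_coe.mp hb) b' (Finset.mem_coe.mp hb') hne)
        hx (emb_mem_tri.mp h2)
    rw [Finset.card_image_of_injOn hinj, q.card_nonzero]
  nonzero_nonempty := by
    intro s hs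
    obtain ⟨b, hb, rfl⟩ := Finset.mem_image.mp hs
    obtain ⟨x, hx⟩ := q.nonzero_nonempty b hb
    exact ⟨emb x, emb_mem_tri.mpr hx⟩
  zero_disjoint := fun a b hab =>
    tri_disjoint (q.zero_disjoint a b hab) (fun h => hab (Sum.inl.inj h))
  zero_nonzero_disjoint := by
    intro a s hs
    obtain ⟨b, hb, rfl⟩ := Finset.mem_image.mp hs
    exact tri_disjoint (q.zero_nonzero_disjoint a b hb) (by simp)
  nonzero_disjoint := by
    intro s hs t ht hne
    obtain ⟨b, hb, rfl⟩ := Finset.mem_image.mp hs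
    obtain ⟨b', hb', rfl⟩ := Finset.mem_image.mp ht
    have hbb : b ≠ b' := by rintro rfl; exact hne rfl
    exact tri_disjoint (q.nonzero_disjoint b hb b' hb' hbb)
      (fun h => hbb (Sum.inr.inj h))
  cover := by
    intro y
    by_cases hl : y.1 = Fin.last n
    · rcases eq_L0_or_L1 hl with rfl | rfl
      · rcases h1 : pl.1 with a | b
        · exact Or.inl ⟨a, L0_mem_tri.mpr h1⟩
        · exact Or.inr ⟨tri pl (Sum.inr b) b,
            Finset.mem_image_of_mem _ (hpl.2.2.1 b h1), L0_mem_tri.mpr h1⟩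
      · rcases h2 : pl.2 with a | b
        · exact Or.inl ⟨a, L1_mem_tri.mpr h2⟩
        · exact Or.inr ⟨tri pl (Sum.inr b) b,
            Finset.mem_image_of_mem _ (hpl.2.2.2 b h2), L1_mem_tri.mpr h2⟩
    · obtain ⟨x, rfl⟩ := exists_emb hl
      rcases q.cover x with ⟨a, ha⟩ | ⟨b, hb, hxb⟩
      · exact Or.inl ⟨a, emb_mem_tri.mpr ha⟩
      · exact Or.inr ⟨tri pl (Sum.inr b) b, Finset.mem_image_of_mem _ hb,
          emb_mem_tri.mpr hxb⟩
  zero_no_both := by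
    intro i ⟨⟨a, ha⟩, ⟨a', ha'⟩⟩
    by_cases hl : i = Fin.last n
    · subst hl
      have h1 : pl.1 = Sum.inl a := L0_mem_tri.mp ha
      have h2 : pl.2 = Sum.inl a' := L1_mem_tri.mp ha'
      rcases hpl.2.1 with h | h
      · rw [h1] at h; simp at h
      · rw [h2] at h; simp at h
    · obtain ⟨i', rfl⟩ := Fin.exists_castSucc_eq.mpr hl
      exact q.zero_no_both i'
        ⟨⟨a, emb_mem_tri.mp ha⟩, ⟨a', emb_mem_tri.mp ha'⟩⟩
  nonzero_min := by
    intro s hs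
    obtain ⟨b, hb, rfl⟩ := Finset.mem_image.mp hs
    obtain ⟨m, hm0, hm1, hmin, hboth⟩ := q.nonzero_min b hb
    refine ⟨m.castSucc, emb_mem_tri.mpr hm0, emb_mem_tri.mpr hm1, ?_, ?_⟩
    · intro x hx
      rw [mem_tri] at hx
      rcases hx with hx | ⟨_, rfl⟩ | ⟨_, rfl⟩
      · rw [mem_up] at hx
        obtain ⟨x', hx', rfl⟩ := hx
        exact Fin.castSucc_le_castSucc_iff.mpr (hmin x' hx')
      · exact (Fin.castSucc_lt_last m).le
      · exact (Fin.castSucc_lt_last m).le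
    · intro i hi0 hi1
      by_cases hl : i = Fin.last n
      · subst hl
        have h1 : pl.1 = Sum.inr b := L0_mem_tri.mp hi0
        have h2 : pl.2 = Sum.inr b := L1_mem_tri.mp hi1
        exact absurd (h1.trans h2.symm) hpl.1
      · obtain ⟨i', rfl⟩ := Fin.exists_castSucc_eq.mpr hl
        exact congrArg Fin.castSucc
          (hboth i' (emb_mem_tri.mp hi0) (emb_mem_tri.mp hi1))

lemma exists_min_lt (p : JSPartition (n + 1) (j + 1) γ) (hp : pairL ∉ p.nonzero)
    {b : Finset (El (n + 1))} (hb : b ∈ p.nonzero) :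
    ∃ m' : Fin n, (m'.castSucc, false) ∈ b ∧ (m'.castSucc, true) ∈ b ∧
      (∀ x ∈ b, m'.castSucc ≤ x.1) ∧
      (∀ i : Fin (n + 1), (i, false) ∈ b → (i, true) ∈ b → i = m'.castSucc) := by
  obtain ⟨m, hm0, hm1, hmin, hboth⟩ := p.nonzero_min b hb
  have hml : m ≠ Fin.last n := by
    rintro rfl
    apply hp
    have hbp : b = pairL := by
      ext y
      rw [mem_pairL]
      constructor
      · intro hy
        have := hmin y hy
        have hyl : y.1 = Fin.last n := le_antisymm (Fin.le_last _) this
        exact eq_L0_or_L1 hyl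
      · rintro (rfl | rfl)
        · exact hm0
        · exact hm1
    rwa [hbp] at hb
  obtain ⟨m', rfl⟩ := Fin.exists_castSucc_eq.mpr hml
  exact ⟨m', hm0, hm1, hmin, hboth⟩

lemma down_nonempty (p : JSPartition (n + 1) (j + 1) γ) (hp : pairL ∉ p.nonzero)
    {b : Finset (El (n + 1))} (hb : b ∈ p.nonzero) : (down b).Nonempty := by
  obtain ⟨m', hm0, -, -, -⟩ := exists_min_lt p hp hb
  exact ⟨(m', false), mem_down.mpr hm0⟩

lemma down_inj_nonzero (p : JSPartition (n + 1) (j + 1) γ) (hp : pairL ∉ p.nonzero)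
    {b b' : Finset (El (n + 1))} (hb : b ∈ p.nonzero) (hb' : b' ∈ p.nonzero)
    (h : down b = down b') : b = b' := by
  by_contra hne
  obtain ⟨x, hx⟩ := down_nonempty p hp hb
  have hx' : x ∈ down b' := h ▸ hx
  exact Finset.disjoint_left.mp (p.nonzero_disjoint b hb b' hb' hne)
    (mem_down.mp hx) (mem_down.mp hx')

def dropB (p : JSPartition (n + 1) (j + 1) γ) (hp : pairL ∉ p.nonzero) :
    JSPartition n (j + 1) γ where
  zero a := down (p.zero a)
  nonzero := p.nonzero.image down
  card_nonzero := by
    have hinj : Set.InjOn (down (n := n)) ↑p.nonzero := fun b hb b' hb' h =>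
      down_inj_nonzero p hp (Finset.mem_coe.mp hb) (Finset.mem_coe.mp hb') h
    rw [Finset.card_image_of_injOn hinj, p.card_nonzero]
  nonzero_nonempty := by
    intro s hs
    obtain ⟨b, hb, rfl⟩ := Finset.mem_image.mp hs
    exact down_nonempty p hp hb
  zero_disjoint := fun a b hab => down_disjoint (p.zero_disjoint a b hab)
  zero_nonzero_disjoint := by
    intro a s hs
    obtain ⟨b, hb, rfl⟩ := Finset.mem_image.mp hs
    exact down_disjoint (p.zero_nonzero_disjoint a b hb)
  nonzero_disjoint := by
    intro s hs t ht hne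
    obtain ⟨b, hb, rfl⟩ := Finset.mem_image.mp hs
    obtain ⟨b', hb', rfl⟩ := Finset.mem_image.mp ht
    exact down_disjoint (p.nonzero_disjoint b hb b' hb'
      (fun he => hne (congrArg down he)))
  cover := by
    intro x
    rcases p.cover (emb x) with ⟨a, ha⟩ | ⟨b, hb, hxb⟩
    · exact Or.inl ⟨a, mem_down.mpr ha⟩
    · exact Or.inr ⟨down b, Finset.mem_image_of_mem _ hb, mem_down.mpr hxb⟩
  zero_no_both := by
    intro i ⟨⟨a, ha⟩, ⟨a', ha'⟩⟩
    exact p.zero_no_both i.castSucc ⟨⟨a, mem_down.mp ha⟩, ⟨a', mem_down.mp ha'⟩⟩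
  nonzero_min := by
    intro s hs
    obtain ⟨b, hb, rfl⟩ := Finset.mem_image.mp hs
    obtain ⟨m', hm0, hm1, hmin, hboth⟩ := exists_min_lt p hp hb
    refine ⟨m', mem_down.mpr hm0, mem_down.mpr hm1, ?_, ?_⟩
    · intro x hx
      exact Fin.castSucc_le_castSucc_iff.mp (hmin (emb x) (mem_down.mp hx))
    · intro i hi0 hi1
      exact Fin.castSucc_inj.mp (hboth i.castSucc (mem_down.mp hi0) (mem_down.mp hi1))

noncomputable def slotOf (p : JSPartition (n + 1) (j + 1) γ) (y : El (n + 1)) :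
    Slot n γ :=
  if h : ∃ a, y ∈ p.zero a then Sum.inl h.choose
  else Sum.inr (down ((p.cover y).resolve_left h).choose)

lemma slotOf_inl_iff {p : JSPartition (n + 1) (j + 1) γ} {y : El (n + 1)} {a : Fin γ} :
    slotOf p y = Sum.inl a ↔ y ∈ p.zero a := by
  constructor
  · intro h
    unfold slotOf at h
    split_ifs at h with hex
    have hs := hex.choose_spec
    rwa [Sum.inl.inj h] at hs
  · intro hy
    have hex : ∃ a, y ∈ p.zero a := ⟨a, hy⟩
    unfold slotOf
    rw [dif_pos hex]
    have hs := hex.choose_spec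
    by_cases hca : hex.choose = a
    · rw [hca]
    · exact absurd hy (Finset.disjoint_left.mp (p.zero_disjoint _ _ hca) hs)

lemma slotOf_inr_spec {p : JSPartition (n + 1) (j + 1) γ} {y : El (n + 1)}
    {s : Finset (El n)} (h : slotOf p y = Sum.inr s) :
    ∃ b ∈ p.nonzero, y ∈ b ∧ down b = s := by
  unfold slotOf at h
  split_ifs at h with hex
  obtain ⟨hb, hy⟩ := ((p.cover y).resolve_left hex).choose_spec
  exact ⟨_, hb, hy, Sum.inr.inj h⟩

lemma slotOf_inr {p : JSPartition (n + 1) (j + 1) γ} {y : El (n + 1)}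
    {b : Finset (El (n + 1))} (hb : b ∈ p.nonzero) (hy : y ∈ b) :
    slotOf p y = Sum.inr (down b) := by
  have hex : ¬∃ a, y ∈ p.zero a := by
    rintro ⟨a, ha⟩
    exact Finset.disjoint_left.mp (p.zero_nonzero_disjoint a b hb) ha hy
  unfold slotOf
  rw [dif_neg hex]
  obtain ⟨hb', hy'⟩ := ((p.cover y).resolve_left hex).choose_spec
  by_cases hbb : ((p.cover y).resolve_left hex).choose = b
  · rw [hbb]
  · exact absurd hy (Finset.disjoint_left.mp (p.nonzero_disjoint _ hb' b hb hbb) hy')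

noncomputable def plOf (p : JSPartition (n + 1) (j + 1) γ) : Slot n γ × Slot n γ :=
  (slotOf p L0, slotOf p L1)

lemma ok_plOf (p : JSPartition (n + 1) (j + 1) γ) (hp : pairL ∉ p.nonzero) :
    Ok (p.nonzero.image down) (plOf p) := by
  refine ⟨?_, ?_, ?_, ?_⟩
  · intro he
    simp only [plOf] at he
    rcases h0 : slotOf p L0 with a | s
    · have h1 : slotOf p L1 = Sum.inl a := by rw [← he, h0]
      exact p.zero_no_both (Fin.last n)
        ⟨⟨a, slotOf_inl_iff.mp h0⟩, ⟨a, slotOf_inl_iff.mp h1⟩⟩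
    · have h1 : slotOf p L1 = Sum.inr s := by rw [← he, h0]
      obtain ⟨b0, hb0, hy0, hd0⟩ := slotOf_inr_spec h0
      obtain ⟨b1, hb1, hy1, hd1⟩ := slotOf_inr_spec h1
      have hbb : b0 = b1 := down_inj_nonzero p hp hb0 hb1 (hd0.trans hd1.symm)
      subst hbb
      obtain ⟨m', -, -, -, hboth⟩ := exists_min_lt p hp hb0
      have := hboth (Fin.last n) hy0 hy1
      exact absurd this.symm (Fin.ne_last_of_lt (Fin.castSucc_lt_last m'))
  · simp only [plOf]
    rcases h0 : slotOf p L0 with a | s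
    · rcases h1 : slotOf p L1 with a' | s'
      · exact absurd ⟨⟨a, slotOf_inl_iff.mp h0⟩, ⟨a', slotOf_inl_iff.mp h1⟩⟩
          (p.zero_no_both (Fin.last n))
      · right; simp [h1]
    · left; simp [h0]
  · intro b hb
    simp only [plOf] at hb
    obtain ⟨b0, hb0, _, hd0⟩ := slotOf_inr_spec hb
    exact hd0 ▸ Finset.mem_image_of_mem _ hb0
  · intro b hb
    simp only [plOf] at hb
    obtain ⟨b1, hb1, _, hd1⟩ := slotOf_inr_spec hb
    exact hd1 ▸ Finset.mem_image_of_mem _ hb1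

lemma pairL_not_mem_liftB (q : JSPartition n (j + 1) γ) (pl : Slot n γ × Slot n γ)
    (hpl : Ok q.nonzero pl) : pairL ∉ (liftB q pl hpl).nonzero := by
  intro h
  obtain ⟨b, hb, he⟩ := Finset.mem_image.mp h
  obtain ⟨x, hx⟩ := q.nonzero_nonempty b hb
  have hm : emb x ∈ pairL := he ▸ emb_mem_tri.mpr hx
  rcases mem_pairL.mp hm with h' | h' <;>
    exact emb_fst_ne_last x (congrArg Prod.fst h')

lemma dropB_liftB (q : JSPartition n (j + 1) γ) (pl : Slot n γ × Slot n γ)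
    (hpl : Ok q.nonzero pl) (hnp : pairL ∉ (liftB q pl hpl).nonzero) :
    dropB (liftB q pl hpl) hnp = q := by
  apply JSPartition.ext'
  · funext a
    exact down_tri pl (Sum.inl a) (q.zero a)
  · show (q.nonzero.image (fun b => tri pl (Sum.inr b) b)).image down = q.nonzero
    rw [Finset.image_image]
    have heq : Set.EqOn (down ∘ fun b => tri pl (Sum.inr b) b) id ↑q.nonzero :=
      fun b _ => down_tri pl (Sum.inr b) b
    rw [Finset.image_congr heq, Finset.image_id]

lemma plOf_liftB (q : JSPartition n (j + 1) γ) (pl : Slot n γ × Slot n γ)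
    (hpl : Ok q.nonzero pl) : plOf (liftB q pl hpl) = pl := by
  have h0 : slotOf (liftB q pl hpl) L0 = pl.1 := by
    rcases h1 : pl.1 with a | b
    · exact slotOf_inl_iff.mpr (L0_mem_tri.mpr h1)
    · have hb : b ∈ q.nonzero := hpl.2.2.1 b h1
      have hmem : tri pl (Sum.inr b) b ∈ (liftB q pl hpl).nonzero :=
        Finset.mem_image_of_mem _ hb
      rw [slotOf_inr hmem (L0_mem_tri.mpr h1), down_tri]
  have h1 : slotOf (liftB q pl hpl) L1 = pl.2 := by
    rcases h2 : pl.2 with a | b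
    · exact slotOf_inl_iff.mpr (L1_mem_tri.mpr h2)
    · have hb : b ∈ q.nonzero := hpl.2.2.2 b h2
      have hmem : tri pl (Sum.inr b) b ∈ (liftB q pl hpl).nonzero :=
        Finset.mem_image_of_mem _ hb
      rw [slotOf_inr hmem (L1_mem_tri.mpr h2), down_tri]
  exact Prod.ext h0 h1

lemma liftB_zero_eq (p : JSPartition (n + 1) (j + 1) γ) (a : Fin γ) :
    tri (plOf p) (Sum.inl a) (down (p.zero a)) = p.zero a := by
  ext y
  rw [mem_tri]
  simp only [plOf]
  constructor
  · rintro (hy | ⟨h0, rfl⟩ | ⟨h1, rfl⟩)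
    · rw [mem_up] at hy
      obtain ⟨x, hx, rfl⟩ := hy
      exact mem_down.mp hx
    · exact slotOf_inl_iff.mp h0
    · exact slotOf_inl_iff.mp h1
  · intro hy
    by_cases hl : y.1 = Fin.last n
    · rcases eq_L0_or_L1 hl with rfl | rfl
      · exact Or.inr (Or.inl ⟨slotOf_inl_iff.mpr hy, rfl⟩)
      · exact Or.inr (Or.inr ⟨slotOf_inl_iff.mpr hy, rfl⟩)
    · obtain ⟨x, rfl⟩ := exists_emb hl
      exact Or.inl (emb_mem_up.mpr (mem_down.mpr hy))

lemma tri_down_eq (p : JSPartition (n + 1) (j + 1) γ) (hp : pairL ∉ p.nonzero)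
    {b : Finset (El (n + 1))} (hb : b ∈ p.nonzero) :
    tri (plOf p) (Sum.inr (down b)) (down b) = b := by
  ext y
  rw [mem_tri]
  simp only [plOf]
  constructor
  · rintro (hy | ⟨h0, rfl⟩ | ⟨h1, rfl⟩)
    · rw [mem_up] at hy
      obtain ⟨x, hx, rfl⟩ := hy
      exact mem_down.mp hx
    · obtain ⟨b0, hb0, hy0, hd0⟩ := slotOf_inr_spec h0
      rwa [down_inj_nonzero p hp hb0 hb hd0] at hy0
    · obtain ⟨b1, hb1, hy1, hd1⟩ := slotOf_inr_spec h1
      rwa [down_inj_nonzero p hp hb1 hb hd1] at hy1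
  · intro hy
    by_cases hl : y.1 = Fin.last n
    · rcases eq_L0_or_L1 hl with rfl | rfl
      · exact Or.inr (Or.inl ⟨slotOf_inr hb hy, rfl⟩)
      · exact Or.inr (Or.inr ⟨slotOf_inr hb hy, rfl⟩)
    · obtain ⟨x, rfl⟩ := exists_emb hl
      exact Or.inl (emb_mem_up.mpr (mem_down.mpr hy))

lemma liftB_dropB (p : JSPartition (n + 1) (j + 1) γ) (hp : pairL ∉ p.nonzero) :
    liftB (dropB p hp) (plOf p) (ok_plOf p hp) = p := by
  apply JSPartition.ext'
  · funext a
    exact liftB_zero_eq p a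
  · show ((p.nonzero.image down).image (fun s => tri (plOf p) (Sum.inr s) s)) = p.nonzero
    rw [Finset.image_image]
    have heq : Set.EqOn ((fun s => tri (plOf p) (Sum.inr s) s) ∘ down) id ↑p.nonzero :=
      fun b hb => tri_down_eq p hp (Finset.mem_coe.mp hb)
    rw [Finset.image_congr heq, Finset.image_id]

def Big (n j γ : ℕ) :=
  {x : JSPartition n (j + 1) γ × (Slot n γ × Slot n γ) // Ok x.1.nonzero x.2}

noncomputable def mainEquiv (n j γ : ℕ) :
    (JSPartition n j γ) ⊕ Big n j γ ≃ JSPartition (n + 1) (j + 1) γ where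
  toFun x :=
    match x with
    | Sum.inl q => liftA q
    | Sum.inr ⟨⟨q, pl⟩, hpl⟩ => liftB q pl hpl
  invFun p :=
    if h : pairL ∈ p.nonzero then Sum.inl (dropA p h)
    else Sum.inr ⟨(dropB p h, plOf p), ok_plOf p h⟩
  left_inv := by
    rintro (q | ⟨⟨q, pl⟩, hpl⟩)
    · simp only
      have hmem : pairL ∈ (liftA q).nonzero := Finset.mem_insert_self pairL _
      rw [dif_pos hmem]
      exact congrArg Sum.inl (dropA_liftA q _)
    · have hnp : pairL ∉ (liftB q pl hpl).nonzero := pairL_not_mem_liftB q pl hpl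
      simp only
      rw [dif_neg hnp]
      apply congrArg Sum.inr
      apply Subtype.ext
      exact Prod.ext (dropB_liftB q pl hpl hnp) (plOf_liftB q pl hpl)
  right_inv := by
    intro p
    by_cases h : pairL ∈ p.nonzero
    · simp only
      rw [dif_pos h]
      exact liftA_dropA p h
    · simp only
      rw [dif_neg h]
      exact liftB_dropB p h

instance : Finite (Big n j γ) := by unfold Big; infer_instance

lemma card_step (n j γ : ℕ) :
    Nat.card (JSPartition (n + 1) (j + 1) γ) =
      Nat.card (JSPartition n j γ) +
        (j + 1) * (j + 2 * γ) * Nat.card (JSPartition n (j + 1) γ) := by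
  classical
  rw [← Nat.card_congr (mainEquiv n j γ), Nat.card_sum]
  congr 1
  have hb : Nat.card (Big n j γ) =
      Nat.card (Σ q : JSPartition n (j + 1) γ,
        {pl : Slot n γ × Slot n γ // Ok q.nonzero pl}) :=
    Nat.card_congr (Equiv.subtypeProdEquivSigmaSubtype
      (fun (q : JSPartition n (j + 1) γ) (pl : Slot n γ × Slot n γ) => Ok q.nonzero pl))
  rw [hb, Nat.card_eq_fintype_card, Fintype.card_sigma]
  have hq : ∀ q : JSPartition n (j + 1) γ,
      Fintype.card {pl : Slot n γ × Slot n γ // Ok q.nonzero pl} =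
        (j + 1) * (j + 2 * γ) := by
    intro q
    rw [← Nat.card_eq_fintype_card, card_ok, q.card_nonzero]
    have h1 : (j + 1) * (j + 1) - (j + 1) = (j + 1) * j := by
      rw [Nat.mul_succ]
      omega
    rw [h1]
    ring
  rw [Finset.sum_congr rfl (fun q _ => hq q), Finset.sum_const, Finset.card_univ,
    smul_eq_mul, Nat.card_eq_fintype_card]
  ring

end JSAux

/-- The Jacobi-Stirling number `JS_γ(n,j)` counts the Jacobi-Stirling set partitions
of `[n]₂` into `γ` zero blocks and `j` nonzero blocks. -/
theorem JS_counts_partitions (n j γ : ℕ) :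
    JS (γ : ℚ) n j = (Nat.card (JSPartition n j γ) : ℚ) := by
  induction n generalizing j with
  | zero =>
    cases j with
    | zero =>
      rw [Nat.card_unique]
      norm_num [JS]
    | succ j =>
      rw [Nat.card_of_isEmpty]
      norm_num [JS]
  | succ n ih =>
    cases j with
    | zero =>
      rw [Nat.card_of_isEmpty]
      norm_num [JS]
    | succ j =>
      have hJS : JS (γ : ℚ) (n + 1) (j + 1) =
          JS (γ : ℚ) n j +
            ((j : ℚ) + 1) * (((j : ℚ) + 1) + 2 * (γ : ℚ) - 1) * JS (γ : ℚ) n (j + 1) := rfl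
      rw [hJS, ih j, ih (j + 1), JSAux.card_step]
      push_cast
      ring
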